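/- arXiv:2011.01540 — 7 statements merged into one kernel-verified Lean document; each statement's English description precedes it below -/
import Mathlib

section
/- Structure-preserving Galerkin ROM conserves the Hamiltonian: Let N, r ∈ ℕ, let V ∈ Matrix (Fin N) (Fin r) ℝ, let z̄ ∈ ℝᴺ, let H : ℝᴺ → ℝ be differentiable with gradient ∇H, and let J : ℝᴺ → Matrix (Fin N) (Fin N) ℝ assign to each state a skew-symmetric matrix. Suppose z_r : ℝ → ℝʳ is differentiable and satisfies the reduced skew-gradient system z_r'(t) = (Vᵀ ⬝ J(ẑ t) ⬝ V).mulVec (Vᵀ.mulVec (∇H (ẑ t))) for all t, where ẑ t = z̄ + V.mulVec (z_r t). Then the Hamiltonian evaluated at the reduced approximation is constant: H (ẑ t) = H (ẑ 0) for all t. -/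
open Matrix

lemma skew_dot_zero {n : ℕ} (A : Matrix (Fin n) (Fin n) ℝ) (hA : Aᵀ = -A)
    (u : Fin n → ℝ) : u ⬝ᵥ A.mulVec u = 0 := by
  have h1 : u ⬝ᵥ A.mulVec u = (Aᵀ.mulVec u) ⬝ᵥ u := by
    rw [Matrix.dotProduct_mulVec, Matrix.mulVec_transpose]
  rw [hA] at h1
  have h2 : ((-A).mulVec u) ⬝ᵥ u = -(u ⬝ᵥ A.mulVec u) := by
    simp [Matrix.neg_mulVec, dotProduct_comm]
  linarith [h1, h2 ▸ h1]

/-- The structure-preserving Galerkin ROM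
`z_r' = (Vᵀ J(ẑ) V) (Vᵀ ∇H(ẑ))`, with `ẑ = z̄ + V z_r` and `J(w)` skew-symmetric
for all `w`, conserves the Hamiltonian along the reduced approximation:
`H (ẑ t) = H (ẑ 0)` for all `t`. -/
theorem rom_energy_conservation
    (N r : ℕ)
    (V : Matrix (Fin N) (Fin r) ℝ)
    (zbar : EuclideanSpace ℝ (Fin N))
    (H : EuclideanSpace ℝ (Fin N) → ℝ)
    (gradH : EuclideanSpace ℝ (Fin N) → EuclideanSpace ℝ (Fin N))
    (hH : ∀ w, HasGradientAt H (gradH w) w)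
    (J : EuclideanSpace ℝ (Fin N) → Matrix (Fin N) (Fin N) ℝ)
    (hJ : ∀ w, (J w)ᵀ = -(J w))
    (zr : ℝ → EuclideanSpace ℝ (Fin r))
    (zhat : ℝ → EuclideanSpace ℝ (Fin N))
    (hzhat : ∀ t : ℝ, zhat t = fun i => zbar i + V.mulVec (zr t) i)
    (hzr : ∀ t : ℝ, HasDerivAt zr
      (WithLp.toLp 2 ((Vᵀ * J (zhat t) * V).mulVec (Vᵀ.mulVec (gradH (zhat t))))) t) :
    ∀ t : ℝ, H (zhat t) = H (zhat 0) := by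
  classical
  -- linear map for V as a continuous linear map on Euclidean spaces
  let T : EuclideanSpace ℝ (Fin r) →L[ℝ] EuclideanSpace ℝ (Fin N) :=
    LinearMap.toContinuousLinearMap
      ((Matrix.toEuclideanLin (𝕜 := ℝ) (m := Fin N) (n := Fin r)) V)
  have hT : ∀ x : EuclideanSpace ℝ (Fin r), ∀ i, T x i = V.mulVec x i := by
    intro x i
    simp only [T, LinearMap.coe_toContinuousLinearMap', Matrix.toEuclideanLin_apply]
  have hzhat_eq : ∀ t : ℝ, zhat t = zbar + T (zr t) := by
    intro t
    ext i
    rw [hzhat t]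
    simp [hT]
  -- derivative of zhat
  have hzhatD : ∀ t : ℝ, HasDerivAt zhat
      (T (WithLp.toLp 2 ((Vᵀ * J (zhat t) * V).mulVec (Vᵀ.mulVec (gradH (zhat t)))))) t := by
    intro t
    have h1 : HasDerivAt (fun s => T (zr s))
        (T (WithLp.toLp 2 ((Vᵀ * J (zhat t) * V).mulVec (Vᵀ.mulVec (gradH (zhat t)))))) t :=
      (T.hasFDerivAt.comp_hasDerivAt t (hzr t))
    have h2 := h1.const_add zbar
    have : (fun s => zbar + T (zr s)) = zhat := by
      funext s; rw [hzhat_eq s]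
    rwa [this] at h2
  -- derivative of H ∘ zhat is zero
  have hHD : ∀ t : ℝ, HasDerivAt (fun s => H (zhat s)) 0 t := by
    intro t
    have hcomp := ((hH (zhat t)).hasFDerivAt).comp_hasDerivAt t (hzhatD t)
    have hval : (InnerProductSpace.toDual ℝ (EuclideanSpace ℝ (Fin N)) (gradH (zhat t)))
        (T (WithLp.toLp 2 ((Vᵀ * J (zhat t) * V).mulVec (Vᵀ.mulVec (gradH (zhat t)))))) = 0 := by
      rw [InnerProductSpace.toDual_apply_apply]
      set g := gradH (zhat t) with hg
      set A := Vᵀ * J (zhat t) * V with hA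
      set d := A.mulVec (Vᵀ.mulVec g) with hd
      have hinner : (inner ℝ g (T (WithLp.toLp 2 d)) : ℝ) = g ⬝ᵥ V.mulVec d := by
        rw [PiLp.inner_apply]
        simp [hT, dotProduct, RCLike.inner_apply, mul_comm]
      rw [hinner]
      have : g ⬝ᵥ V.mulVec d = (Vᵀ.mulVec g) ⬝ᵥ d := by
        rw [Matrix.dotProduct_mulVec, Matrix.mulVec_transpose]
      rw [this, hd]
      apply skew_dot_zero
      rw [hA]
      rw [Matrix.transpose_mul, Matrix.transpose_mul, Matrix.transpose_transpose, hJ]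
      rw [Matrix.mul_assoc]
      simp [Matrix.mul_assoc]
    rw [hval] at hcomp
    exact hcomp
  intro t
  have hdiff : Differentiable ℝ (fun s => H (zhat s)) := fun s => (hHD s).differentiableAt
  have : ∀ s, deriv (fun s => H (zhat s)) s = 0 := fun s => (hHD s).deriv
  exact is_const_of_deriv_eq_zero hdiff this t 0
end

section
/- The AVF method preserves quadratic Casimirs: Let n ∈ ℕ, let H : ℝⁿ → ℝ be continuously differentiable with gradient ∇H, let J : ℝⁿ → Matrix (Fin n) (Fin n) ℝ assign to each state a skew-symmetric matrix, and let Δt ∈ ℝ. Let A ∈ Matrix (Fin n) (Fin n) ℝ be symmetric, b ∈ ℝⁿ, and define C(z) = (1/2)·⟨z, A.mulVec z⟩ + ⟨b, z⟩. Assume C is a Casimir: (J w).mulVec (A.mulVec w + b) = 0 for all w ∈ ℝⁿ. If z⁰, z¹ ∈ ℝⁿ satisfy the AVF step z¹ = z⁰ + Δt · (J((z⁰ + z¹)/2)).mulVec (∫₀¹ ∇H(z⁰ + ξ·(z¹ − z⁰)) dξ), then C(z¹) = C(z⁰). -/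
open Matrix intervalIntegral

/-- The AVF method preserves quadratic Casimirs: if
`C(z) = ½⟪z, A z⟫ + ⟪b, z⟫` with `A` symmetric and `J(w)(Aw + b) = 0` for all
`w`, and `z¹ = z⁰ + Δt • J((z⁰+z¹)/2) ∫₀¹ ∇H(z⁰ + ξ(z¹-z⁰)) dξ` with `J(w)`
skew-symmetric, then `C z¹ = C z⁰`. -/
theorem avf_quadratic_casimir_conservation
    (n : ℕ)
    (H : EuclideanSpace ℝ (Fin n) → ℝ)
    (gradH : EuclideanSpace ℝ (Fin n) → EuclideanSpace ℝ (Fin n))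
    (hH : ∀ w, HasGradientAt H (gradH w) w)
    (hHsmooth : ContDiff ℝ 1 H)
    (J : EuclideanSpace ℝ (Fin n) → Matrix (Fin n) (Fin n) ℝ)
    (hJ : ∀ w, (J w)ᵀ = -(J w))
    (Δt : ℝ)
    (A : Matrix (Fin n) (Fin n) ℝ)
    (hA : Aᵀ = A)
    (b : EuclideanSpace ℝ (Fin n))
    (C : EuclideanSpace ℝ (Fin n) → ℝ)
    (hC : ∀ z : EuclideanSpace ℝ (Fin n),
      C z = (1/2) * inner ℝ z (WithLp.toLp 2 (A.mulVec z : Fin n → ℝ) : EuclideanSpace ℝ (Fin n))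
        + inner ℝ b z)
    (hCasimir : ∀ w : EuclideanSpace ℝ (Fin n),
      (J w).mulVec ((fun i => A.mulVec w i + b i) : Fin n → ℝ) = 0)
    (z0 z1 : EuclideanSpace ℝ (Fin n))
    (hstep : z1 = fun i => z0 i + Δt *
      (J ((2:ℝ)⁻¹ • (z0 + z1))).mulVec
        (∫ ξ in (0:ℝ)..1, gradH (z0 + ξ • (z1 - z0))) i) :
    C z1 = C z0 := by
  classical
  set m : EuclideanSpace ℝ (Fin n) := (2:ℝ)⁻¹ • (z0 + z1) with hm
  obtain ⟨v, hw⟩ : ∃ v : Fin n → ℝ,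
      ∀ i, z1 i = z0 i + Δt * ((J m).mulVec v) i :=
    ⟨_, fun i => congrFun hstep i⟩
  set d : Fin n → ℝ := fun i => Δt * (J m).mulVec v i with hd
  have hz1 : ∀ i, z1 i = z0 i + d i := hw
  -- the quadratic form in dotProduct language
  have hCd : ∀ z : EuclideanSpace ℝ (Fin n),
      C z = (1/2) * ((z : Fin n → ℝ) ⬝ᵥ A.mulVec z) + ((b : Fin n → ℝ) ⬝ᵥ z) := by
    intro z
    rw [hC]
    simp [PiLp.inner_apply, RCLike.inner_apply, dotProduct, mul_comm]
  have hsym : ∀ x y : Fin n → ℝ, x ⬝ᵥ A.mulVec y = y ⬝ᵥ A.mulVec x := by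
    intro x y
    rw [Matrix.dotProduct_mulVec, ← Matrix.mulVec_transpose, hA, dotProduct_comm]
  have hkey : (fun i => A.mulVec m i + b i) ⬝ᵥ d = 0 := by
    have h1 : (fun i => A.mulVec m i + b i) ⬝ᵥ d
        = Δt * ((fun i => A.mulVec m i + b i) ⬝ᵥ (J m).mulVec v) := by
      simp only [hd, dotProduct, Finset.mul_sum]
      exact Finset.sum_congr rfl fun i _ => by ring
    rw [h1, Matrix.dotProduct_mulVec,
      show J m = (-(J m))ᵀ by rw [Matrix.transpose_neg, hJ, neg_neg],
      Matrix.vecMul_transpose, Matrix.neg_mulVec, hCasimir]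
    simp
  have hmz : ∀ i, m i = z0 i + (2:ℝ)⁻¹ * d i := by
    intro i
    rw [hm]
    simp [PiLp.smul_apply, PiLp.add_apply, hz1 i]
    ring
  -- express z1, m as plain functions
  have hz1f : (z1 : Fin n → ℝ) = fun i => z0 i + d i := funext hz1
  have hmf : (m : Fin n → ℝ) = fun i => z0 i + (2:ℝ)⁻¹ * d i := funext hmz
  have expand : C z1 - C z0 = (fun i => A.mulVec m i + b i) ⬝ᵥ d := by
    rw [hCd z1, hCd z0]
    have e1 : (z1 : Fin n → ℝ) ⬝ᵥ A.mulVec z1 - (z0 : Fin n → ℝ) ⬝ᵥ A.mulVec z0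
        = (fun i => z0 i + z1 i) ⬝ᵥ A.mulVec d := by
      have : (fun i => (z0 : Fin n → ℝ) i + z1 i) ⬝ᵥ A.mulVec d
          = z0 ⬝ᵥ A.mulVec d + z1 ⬝ᵥ A.mulVec d := by
        simp [dotProduct, add_mul, Finset.sum_add_distrib]
      rw [this]
      have hd0 : (d : Fin n → ℝ) = fun i => z1 i - z0 i := by
        funext i; rw [hz1 i]; ring
      rw [hd0]
      have hAd : A.mulVec (fun i => (z1 : Fin n → ℝ) i - z0 i)
          = fun i => A.mulVec z1 i - A.mulVec z0 i := by
        funext i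
        simp [Matrix.mulVec, dotProduct, mul_sub, Finset.sum_sub_distrib]
      rw [hAd]
      have e2 : ∀ x : Fin n → ℝ, x ⬝ᵥ (fun i => A.mulVec z1 i - A.mulVec z0 i)
          = x ⬝ᵥ A.mulVec z1 - x ⬝ᵥ A.mulVec z0 := by
        intro x
        simp [dotProduct, mul_sub, Finset.sum_sub_distrib]
      rw [e2, e2]
      rw [hsym z0 z1]
      ring
    have e3 : (fun i => A.mulVec m i + b i) ⬝ᵥ d
        = m ⬝ᵥ A.mulVec d + b ⬝ᵥ d := by
      rw [hsym m d]
      simp [dotProduct, add_mul, Finset.sum_add_distrib, mul_comm]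
    rw [e3]
    have e4 : (m : Fin n → ℝ) ⬝ᵥ A.mulVec d
        = (2:ℝ)⁻¹ * ((fun i => (z0 : Fin n → ℝ) i + z1 i) ⬝ᵥ A.mulVec d) := by
      have : (m : Fin n → ℝ) = fun i => (2:ℝ)⁻¹ * (z0 i + z1 i) := by
        funext i
        rw [hm]
        simp [PiLp.smul_apply, PiLp.add_apply, mul_add]
      rw [this]
      simp [dotProduct, Finset.mul_sum, mul_assoc]
    have e5 : (b : Fin n → ℝ) ⬝ᵥ d = b ⬝ᵥ (z1 : Fin n → ℝ) - b ⬝ᵥ (z0 : Fin n → ℝ) := by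
      have hd0 : (d : Fin n → ℝ) = fun i => z1 i - z0 i := by
        funext i; rw [hz1 i]; ring
      rw [hd0]
      simp [dotProduct, mul_sub, Finset.sum_sub_distrib]
    rw [e4, e5, ← e1]
    ring
  have := expand
  rw [hkey] at this
  linarith
end

section
/- The AVF method preserves linear invariants: Let n ∈ ℕ, let f : ℝⁿ → ℝⁿ be continuous, let Δt ∈ ℝ, and let c ∈ ℝⁿ satisfy ⟨c, f(z)⟩ = 0 for all z ∈ ℝⁿ. If z⁰, z¹ ∈ ℝⁿ satisfy the general AVF step z¹ = z⁰ + Δt · ∫₀¹ f(z⁰ + ξ·(z¹ − z⁰)) dξ, then ⟨c, z¹⟩ = ⟨c, z⁰⟩. -/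
open Matrix intervalIntegral

/-- The AVF method preserves linear invariants: if `⟨c, f z⟩ = 0` for all `z`
and `z¹ = z⁰ + Δt • ∫₀¹ f(z⁰ + ξ(z¹-z⁰)) dξ`, then `⟨c, z¹⟩ = ⟨c, z⁰⟩`. -/
theorem avf_linear_invariant
    (n : ℕ)
    (f : EuclideanSpace ℝ (Fin n) → EuclideanSpace ℝ (Fin n))
    (hf : Continuous f)
    (Δt : ℝ)
    (c : EuclideanSpace ℝ (Fin n))
    (hc : ∀ z : EuclideanSpace ℝ (Fin n), (inner ℝ c (f z) : ℝ) = 0)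
    (z0 z1 : EuclideanSpace ℝ (Fin n))
    (hstep : z1 = z0 + Δt • ∫ ξ in (0:ℝ)..1, f (z0 + ξ • (z1 - z0))) :
    (inner ℝ c z1 : ℝ) = inner ℝ c z0 := by
  have hcont : Continuous fun ξ : ℝ => f (z0 + ξ • (z1 - z0)) :=
    hf.comp (continuous_const.add (continuous_id.smul continuous_const))
  have hint : IntervalIntegrable (fun ξ : ℝ => f (z0 + ξ • (z1 - z0)))
      MeasureTheory.volume 0 1 := hcont.intervalIntegrable _ _
  have key : (inner ℝ c (∫ ξ in (0:ℝ)..1, f (z0 + ξ • (z1 - z0))) : ℝ) = 0 := by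
    have := (innerSL ℝ c).intervalIntegral_comp_comm hint
    simp only [innerSL_apply_apply] at this
    rw [← this]
    simp [hc]
  rw [hstep, inner_add_right, inner_smul_right, key]
  simp
end

section
/- The AVF method is invariant with respect to linear transformations: Let n ∈ ℕ, let f : ℝⁿ → ℝⁿ be continuous, let Δt ∈ ℝ, and let A ∈ Matrix (Fin n) (Fin n) ℝ be invertible. Define the transformed vector field g(w) = A.mulVec (f (A⁻¹.mulVec w)). If z⁰, z¹ ∈ ℝⁿ satisfy the AVF step z¹ = z⁰ + Δt · ∫₀¹ f(z⁰ + ξ·(z¹ − z⁰)) dξ, then the transformed states w⁰ = A.mulVec z⁰ and w¹ = A.mulVec z¹ satisfy the AVF step for g: w¹ = w⁰ + Δt · ∫₀¹ g(w⁰ + ξ·(w¹ − w⁰)) dξ. -/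
open Matrix intervalIntegral

/-- The AVF method is invariant with respect to invertible linear
transformations: if `z¹ = z⁰ + Δt • ∫₀¹ f(z⁰ + ξ(z¹-z⁰)) dξ` and
`g(w) = A f(A⁻¹ w)`, then `w⁰ = A z⁰`, `w¹ = A z¹` satisfy
`w¹ = w⁰ + Δt • ∫₀¹ g(w⁰ + ξ(w¹-w⁰)) dξ`. -/
theorem avf_linear_invariance
    (n : ℕ)
    (f : EuclideanSpace ℝ (Fin n) → EuclideanSpace ℝ (Fin n))
    (hf : Continuous f)
    (Δt : ℝ)
    (A : Matrix (Fin n) (Fin n) ℝ)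
    (hA : IsUnit A)
    (g : EuclideanSpace ℝ (Fin n) → EuclideanSpace ℝ (Fin n))
    (hg : ∀ w : EuclideanSpace ℝ (Fin n),
      g w = A.mulVec (f (WithLp.toLp 2 (A⁻¹.mulVec w))))
    (z0 z1 : EuclideanSpace ℝ (Fin n))
    (hstep : z1 = z0 + Δt • ∫ ξ in (0:ℝ)..1, f (z0 + ξ • (z1 - z0)))
    (w0 w1 : EuclideanSpace ℝ (Fin n))
    (hw0 : w0 = A.mulVec z0) (hw1 : w1 = A.mulVec z1) :
    w1 = w0 + Δt • ∫ ξ in (0:ℝ)..1, g (w0 + ξ • (w1 - w0)) := by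
  set L : EuclideanSpace ℝ (Fin n) →L[ℝ] EuclideanSpace ℝ (Fin n) :=
    LinearMap.toContinuousLinearMap ((WithLp.linearEquiv 2 ℝ (Fin n → ℝ)).symm.toLinearMap ∘ₗ
      A.mulVecLin ∘ₗ (WithLp.linearEquiv 2 ℝ (Fin n → ℝ)).toLinearMap) with hL
  have hLapp : ∀ v : EuclideanSpace ℝ (Fin n), L v = A.mulVec v := fun v => rfl
  have hinv : ∀ v : EuclideanSpace ℝ (Fin n), A⁻¹.mulVec (A.mulVec v) = v := by
    intro v
    rw [Matrix.mulVec_mulVec, Matrix.nonsing_inv_mul A ((Matrix.isUnit_iff_isUnit_det A).mp hA),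
      Matrix.one_mulVec]
  have key : ∀ ξ : ℝ, g (w0 + ξ • (w1 - w0)) = L (f (z0 + ξ • (z1 - z0))) := by
    intro ξ
    apply WithLp.ofLp_injective
    rw [hg, hLapp]
    have : (w0 + ξ • (w1 - w0)).ofLp = A.mulVec (z0 + ξ • (z1 - z0)).ofLp := by
      simp [hw0, hw1, Matrix.mulVec_add, Matrix.mulVec_smul, Matrix.mulVec_sub]
    rw [this, hinv, WithLp.toLp_ofLp]
  have hint : IntervalIntegrable (fun ξ : ℝ => f (z0 + ξ • (z1 - z0)))
      MeasureTheory.volume 0 1 :=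
    (hf.comp (continuous_const.add (continuous_id.smul continuous_const) : Continuous fun ξ : ℝ => z0 + ξ • (z1 - z0))).intervalIntegrable 0 1
  calc w1 = L z1 := by apply WithLp.ofLp_injective; rw [hw1, hLapp]
    _ = L (z0 + Δt • ∫ ξ in (0:ℝ)..1, f (z0 + ξ • (z1 - z0))) := by rw [← hstep]
    _ = w0 + Δt • ∫ ξ in (0:ℝ)..1, g (w0 + ξ • (w1 - w0)) := by
        simp only [key]
        rw [map_add, L.map_smul, ← L.intervalIntegral_comp_comm hint]
        congr 1
        apply WithLp.ofLp_injective
        rw [hw0, hLapp]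
end

section
/- Skew-symmetry of the DEIM-reduced Poisson matrix: Let N, r ∈ ℕ, let D_x, D_y ∈ Matrix (Fin N) (Fin N) ℝ be skew-symmetric, let V_h, V_u, V_v, V_s ∈ Matrix (Fin N) (Fin r) ℝ, and let f₁, f₂, f₃ ∈ ℝᴺ. Then the 4r×4r block matrix J̃_r = [[0, −V_hᵀD_xV_u, −V_hᵀD_yV_v, 0], [−V_uᵀD_xV_h, 0, V_uᵀ diag(f₁) V_v, V_uᵀ diag(f₂) V_s], [−V_vᵀD_yV_h, −V_vᵀ diag(f₁) V_u, 0, V_vᵀ diag(f₃) V_s], [0, −V_sᵀ diag(f₂) V_u, −V_sᵀ diag(f₃) V_v, 0]] is skew-symmetric, i.e. J̃_rᵀ = −J̃_r. -/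
open Matrix

/-- Skew-symmetry of the DEIM-reduced Poisson matrix of the RTSWE: for
skew-symmetric `D_x, D_y`, arbitrary POD basis matrices `V_h, V_u, V_v, V_s`
and arbitrary DEIM vectors `f₁, f₂, f₃`, the reduced block matrix is
skew-symmetric. -/
theorem rtswe_deim_reduced_poisson_matrix_skew_symmetric
    (N r : ℕ)
    (Dx Dy : Matrix (Fin N) (Fin N) ℝ)
    (hDx : Dxᵀ = -Dx) (hDy : Dyᵀ = -Dy)
    (Vh Vu Vv Vs : Matrix (Fin N) (Fin r) ℝ)
    (f₁ f₂ f₃ : Fin N → ℝ)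
    (Jr : Matrix ((Fin r ⊕ Fin r) ⊕ (Fin r ⊕ Fin r))
               ((Fin r ⊕ Fin r) ⊕ (Fin r ⊕ Fin r)) ℝ)
    (hJr : Jr = fromBlocks
      (fromBlocks 0 (-(Vhᵀ * Dx * Vu)) (-(Vuᵀ * Dx * Vh)) 0)
      (fromBlocks (-(Vhᵀ * Dy * Vv)) 0 (Vuᵀ * diagonal f₁ * Vv) (Vuᵀ * diagonal f₂ * Vs))
      (fromBlocks (-(Vvᵀ * Dy * Vh)) (-(Vvᵀ * diagonal f₁ * Vu)) 0 (-(Vsᵀ * diagonal f₂ * Vu)))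
      (fromBlocks 0 (Vvᵀ * diagonal f₃ * Vs) (-(Vsᵀ * diagonal f₃ * Vv)) 0)) :
    Jrᵀ = -Jr := by
  subst hJr
  simp only [fromBlocks_transpose, fromBlocks_neg, transpose_neg, transpose_zero,
    transpose_mul, transpose_transpose, diagonal_transpose, hDx, hDy, neg_zero]
  congr 1 <;> congr 1 <;> (try ring_nf) <;>
    simp [Matrix.mul_assoc, mul_neg, neg_mul]
end

section
/- POD optimality (Schmidt–Eckart–Young for the Frobenius norm with orthonormal projections): Let N, K, r ∈ ℕ with r ≤ K ≤ N, and let S ∈ Matrix (Fin N) (Fin K) ℝ with singular values σ₁ ≥ σ₂ ≥ … ≥ σ_K ≥ 0 (the square roots of the eigenvalues of SᵀS arranged in decreasing order). Then for every V ∈ Matrix (Fin N) (Fin r) ℝ with orthonormal columns (VᵀV = 1), one has ‖S − V ⬝ Vᵀ ⬝ S‖_F² ≥ Σ_{j=r+1}^{K} σⱼ², and this lower bound is attained when the columns of V are the r left singular vectors of S corresponding to the r largest singular values. -/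
open Matrix Finset

lemma frob_eq_trace {n m : ℕ} (A : Matrix (Fin n) (Fin m) ℝ) :
    trace (Aᵀ * A) = ∑ i, ∑ j, (A i j) ^ 2 := by
  rw [Finset.sum_comm]
  simp [Matrix.trace, Matrix.mul_apply, Matrix.diag, sq]

lemma proj_expand {n m : ℕ} (P : Matrix (Fin n) (Fin n) ℝ) (hPt : Pᵀ = P)
    (hPP : P * P = P) (A : Matrix (Fin n) (Fin m) ℝ) :
    (A - P * A)ᵀ * (A - P * A) = Aᵀ * A - Aᵀ * (P * A) := by
  have h1 : Aᵀ * P * (P * A) = Aᵀ * (P * A) := by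
    rw [Matrix.mul_assoc, ← Matrix.mul_assoc P P A, hPP]
  rw [transpose_sub, transpose_mul, hPt, Matrix.sub_mul, Matrix.mul_sub,
    Matrix.mul_sub, h1, Matrix.mul_assoc]
  abel

lemma frob_nonneg {n m : ℕ} (A : Matrix (Fin n) (Fin m) ℝ) :
    0 ≤ ∑ i, ∑ j, (A i j) ^ 2 := by positivity

lemma trace_proj_le {n m : ℕ} (P : Matrix (Fin n) (Fin n) ℝ) (hPt : Pᵀ = P)
    (hPP : P * P = P) (A : Matrix (Fin n) (Fin m) ℝ) :
    trace (Aᵀ * (P * A)) ≤ trace (Aᵀ * A) := by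
  have h := frob_nonneg (A - P * A)
  rw [← frob_eq_trace, proj_expand P hPt hPP A, trace_sub] at h
  linarith

lemma trace_VVt {n r m : ℕ} (V : Matrix (Fin n) (Fin r) ℝ)
    (A : Matrix (Fin n) (Fin m) ℝ) :
    trace (Aᵀ * ((V * Vᵀ) * A)) = trace ((Vᵀ * A)ᵀ * (Vᵀ * A)) := by
  rw [transpose_mul, transpose_transpose, Matrix.mul_assoc V Vᵀ A,
    ← Matrix.mul_assoc Aᵀ V (Vᵀ * A)]

lemma sum_castLE {K r : ℕ} (hrK : r ≤ K) (f : Fin K → ℝ) :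
    ∑ i : Fin r, f (Fin.castLE hrK i) =
      ∑ j ∈ univ.filter (fun j : Fin K => (j : ℕ) < r), f j := by
  rcases Nat.eq_zero_or_pos r with hr | hr
  · subst hr; simp
  refine Finset.sum_nbij' (fun i => Fin.castLE hrK i)
    (fun j => ⟨(j : ℕ) % r, Nat.mod_lt _ hr⟩) ?_ ?_ ?_ ?_ ?_
  · intro i _; simp
  · intro j hj; simp
  · intro i _; ext; simp [Nat.mod_eq_of_lt i.isLt]
  · intro j hj
    simp only [mem_filter, mem_univ, true_and] at hj
    ext; simp [Nat.mod_eq_of_lt hj]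
  · intro i _; rfl

lemma key_sum {K r : ℕ} (hrK : r ≤ K) (b a : Fin K → ℝ) (hb : Antitone b)
    (hb0 : ∀ j, 0 ≤ b j) (ha0 : ∀ j, 0 ≤ a j) (ha1 : ∀ j, a j ≤ 1)
    (hsum : ∑ j, a j ≤ r) :
    ∑ j, b j * a j ≤ ∑ j ∈ univ.filter (fun j : Fin K => (j : ℕ) < r), b j := by
  have hcard : ∑ j ∈ univ.filter (fun j : Fin K => (j : ℕ) < r), (1 : ℝ) = r := by
    rw [← sum_castLE hrK (fun _ => (1 : ℝ))]; simp
  rcases eq_or_lt_of_le hrK with hreq | hrlt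
  · have hfu : univ.filter (fun j : Fin K => (j : ℕ) < r) = univ := by
      apply filter_true_of_mem; intro j _; exact hreq ▸ j.isLt
    rw [hfu]
    exact sum_le_sum fun j _ => mul_le_of_le_one_right (hb0 j) (ha1 j)
  · set c := b ⟨r, hrlt⟩ with hc
    have hba := sum_filter_add_sum_filter_not univ
      (fun j : Fin K => (j : ℕ) < r) (fun j => b j * a j)
    have hasplit := sum_filter_add_sum_filter_not univ
      (fun j : Fin K => (j : ℕ) < r) a
    have h1 : ∑ j ∈ univ.filter (fun j : Fin K => (j : ℕ) < r), b j * a j ≤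
        ∑ j ∈ univ.filter (fun j : Fin K => (j : ℕ) < r), (b j + c * (a j - 1)) := by
      refine sum_le_sum fun j hj => ?_
      simp only [mem_filter, mem_univ, true_and] at hj
      have hcb : c ≤ b j := hb (by simp [Fin.le_def]; omega)
      nlinarith [ha1 j]
    have h2 : ∑ j ∈ univ.filter (fun j : Fin K => ¬ (j : ℕ) < r), b j * a j ≤
        ∑ j ∈ univ.filter (fun j : Fin K => ¬ (j : ℕ) < r), c * a j := by
      refine sum_le_sum fun j hj => ?_
      simp only [mem_filter, mem_univ, true_and] at hj
      have hbc : b j ≤ c := hb (by simp [Fin.le_def]; omega)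
      exact mul_le_mul_of_nonneg_right hbc (ha0 j)
    rw [sum_add_distrib] at h1
    have key : c * (∑ j ∈ univ.filter (fun j : Fin K => (j : ℕ) < r), (a j - 1)) +
        c * (∑ j ∈ univ.filter (fun j : Fin K => ¬ (j : ℕ) < r), a j) ≤ 0 := by
      rw [← mul_add]
      refine mul_nonpos_of_nonneg_of_nonpos (hb0 _) ?_
      rw [sum_sub_distrib, hcard]
      linarith
    rw [← mul_sum] at h1
    rw [← mul_sum] at h2
    linarith

/-- POD optimality (Schmidt–Eckart–Young for the Frobenius norm with
orthonormal projections): for any `V` with orthonormal columns, the squared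
Frobenius projection error `‖S - V Vᵀ S‖_F²` is at least the sum of the
squares of the `K - r` smallest singular values of `S`, and the bound is
attained when the columns of `V` are left singular vectors of `S` for the `r`
largest singular values. -/
theorem pod_optimality
    (N K r : ℕ) (hrK : r ≤ K) (hKN : K ≤ N)
    (S : Matrix (Fin N) (Fin K) ℝ)
    (σ : Fin K → ℝ)
    (hσ_nonneg : ∀ j, 0 ≤ σ j)
    (hσ_anti : Antitone σ)
    (hσ_sing : ∃ U : Matrix (Fin K) (Fin K) ℝ, Uᵀ * U = 1 ∧
      Sᵀ * S = U * diagonal (fun j => σ j ^ 2) * Uᵀ) :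
    (∀ V : Matrix (Fin N) (Fin r) ℝ, Vᵀ * V = 1 →
      (∑ j ∈ univ.filter (fun j : Fin K => r ≤ (j : ℕ)), σ j ^ 2) ≤
        ∑ i, ∑ j, ((S - V * Vᵀ * S) i j) ^ 2) ∧
    (∀ V : Matrix (Fin N) (Fin r) ℝ, Vᵀ * V = 1 →
      (∀ i : Fin r, (S * Sᵀ).mulVec (fun k => V k i) =
        σ (Fin.castLE hrK i) ^ 2 • (fun k => V k i)) →
      ∑ i, ∑ j, ((S - V * Vᵀ * S) i j) ^ 2 =
        ∑ j ∈ univ.filter (fun j : Fin K => r ≤ (j : ℕ)), σ j ^ 2) := by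
  obtain ⟨U, hU, hS⟩ := hσ_sing
  have hUU : U * Uᵀ = 1 := mul_eq_one_comm.mp hU
  set D := diagonal (fun j => σ j ^ 2) with hD
  have htr : trace (Sᵀ * S) = ∑ j, σ j ^ 2 := by
    rw [hS, Matrix.trace_mul_cycle, hU, Matrix.one_mul, hD, trace_diagonal]
  have hYtY : (S * U)ᵀ * (S * U) = D := by
    have e1 : Sᵀ * S * U = U * D := by
      rw [hS, Matrix.mul_assoc (U * D) Uᵀ U, hU, Matrix.mul_one]
    rw [transpose_mul]
    calc Uᵀ * Sᵀ * (S * U) = Uᵀ * (Sᵀ * S * U) := by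
          rw [Matrix.mul_assoc Uᵀ Sᵀ (S * U), Matrix.mul_assoc Sᵀ S U]
      _ = Uᵀ * (U * D) := by rw [e1]
      _ = D := by rw [← Matrix.mul_assoc, hU, Matrix.one_mul]
  have herr : ∀ V : Matrix (Fin N) (Fin r) ℝ, Vᵀ * V = 1 →
      ∑ i, ∑ j, ((S - V * Vᵀ * S) i j) ^ 2 =
        (∑ j, σ j ^ 2) - trace ((Vᵀ * S)ᵀ * (Vᵀ * S)) := by
    intro V hV
    have hPt : (V * Vᵀ)ᵀ = V * Vᵀ := by rw [transpose_mul, transpose_transpose]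
    have hPP : (V * Vᵀ) * (V * Vᵀ) = V * Vᵀ := by
      rw [Matrix.mul_assoc, ← Matrix.mul_assoc Vᵀ V Vᵀ, hV, Matrix.one_mul]
    rw [← frob_eq_trace, proj_expand _ hPt hPP S, trace_sub, htr, trace_VVt]
  have hsplitσ : ∑ j, σ j ^ 2 =
      (∑ j ∈ univ.filter (fun j : Fin K => (j : ℕ) < r), σ j ^ 2) +
        ∑ j ∈ univ.filter (fun j : Fin K => r ≤ (j : ℕ)), σ j ^ 2 := by
    rw [← sum_filter_add_sum_filter_not univ (fun j : Fin K => (j : ℕ) < r)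
      (fun j => σ j ^ 2)]
    congr 1
    apply sum_congr _ (fun _ _ => rfl)
    ext j; simp [not_lt]
  constructor
  · -- lower bound for arbitrary V
    intro V hV
    rw [herr V hV]
    have hPt : (V * Vᵀ)ᵀ = V * Vᵀ := by rw [transpose_mul, transpose_transpose]
    have hPP : (V * Vᵀ) * (V * Vᵀ) = V * Vᵀ := by
      rw [Matrix.mul_assoc, ← Matrix.mul_assoc Vᵀ V Vᵀ, hV, Matrix.one_mul]
    set M := Vᵀ * (S * U) with hM
    set q : Fin K → ℝ := fun j => ∑ i, (M i j) ^ 2 with hq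
    have hq0 : ∀ j, 0 ≤ q j := fun j => by positivity
    have hfrobU : trace ((Vᵀ * S)ᵀ * (Vᵀ * S)) = ∑ j, q j := by
      have hassoc : M = (Vᵀ * S) * U := (Matrix.mul_assoc _ _ _).symm
      have h1 : trace (Mᵀ * M) = trace ((Vᵀ * S)ᵀ * (Vᵀ * S)) := by
        rw [hassoc, transpose_mul]
        rw [Matrix.trace_mul_comm]
        have e : (Vᵀ * S * U) * (Uᵀ * (Vᵀ * S)ᵀ) = (Vᵀ * S) * (Vᵀ * S)ᵀ := by
          rw [Matrix.mul_assoc (Vᵀ * S) U (Uᵀ * (Vᵀ * S)ᵀ),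
            ← Matrix.mul_assoc U Uᵀ (Vᵀ * S)ᵀ, hUU, Matrix.one_mul]
        rw [e, Matrix.trace_mul_comm]
      rw [← h1, frob_eq_trace, Finset.sum_comm]
    rw [hfrobU]
    -- per-column bound q j ≤ σ j ^ 2
    have hq_le : ∀ j, q j ≤ σ j ^ 2 := by
      intro j
      set E : Matrix (Fin K) (Fin K) ℝ :=
        diagonal (fun k => if k = j then (1 : ℝ) else 0) with hE
      have hYE : ((S * U) * E)ᵀ * ((S * U) * E) = E * (D * E) := by
        rw [transpose_mul, hE, diagonal_transpose]
        rw [Matrix.mul_assoc _ (S * U)ᵀ _, ← Matrix.mul_assoc (S * U)ᵀ (S * U) _,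
          hYtY]
      have htrE : trace (((S * U) * E)ᵀ * ((S * U) * E)) = σ j ^ 2 := by
        rw [hYE, hE, hD, diagonal_mul_diagonal, diagonal_mul_diagonal,
          trace_diagonal]
        simp
      have hle := trace_proj_le (V * Vᵀ) hPt hPP ((S * U) * E)
      rw [trace_VVt V ((S * U) * E), htrE] at hle
      have hVE : Vᵀ * ((S * U) * E) = M * E := by
        rw [← Matrix.mul_assoc, hM]
      rw [hVE, frob_eq_trace] at hle
      calc q j = ∑ i, ∑ k, ((M * E) i k) ^ 2 := by
            rw [hq]
            apply sum_congr rfl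
            intro i _
            rw [Finset.sum_eq_single j]
            · simp [hE, Matrix.mul_diagonal]
            · intro k _ hk; simp [hE, Matrix.mul_diagonal, hk]
            · intro h; exact absurd (mem_univ j) h
        _ ≤ σ j ^ 2 := hle
    set dinv : Fin K → ℝ := fun j => if σ j = 0 then 0 else (σ j)⁻¹ with hdinv
    set a : Fin K → ℝ := fun j => (dinv j) ^ 2 * q j with ha
    have ha0 : ∀ j, 0 ≤ a j := fun j => mul_nonneg (sq_nonneg _) (hq0 j)
    have hqa : ∀ j, σ j ^ 2 * a j = q j := by
      intro j
      by_cases h : σ j = 0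
      · have hqj : q j = 0 := le_antisymm (by simpa [h] using hq_le j) (hq0 j)
        simp [ha, hdinv, h, hqj]
      · simp only [ha, hdinv, if_neg h]
        field_simp
    have ha1 : ∀ j, a j ≤ 1 := by
      intro j
      by_cases h : σ j = 0
      · have hqj : q j = 0 := le_antisymm (by simpa [h] using hq_le j) (hq0 j)
        simp [ha, hdinv, h, hqj]
      · have h1 : a j = (σ j)⁻¹ ^ 2 * q j := by simp [ha, hdinv, h]
        have h2 : (σ j)⁻¹ ^ 2 * q j ≤ (σ j)⁻¹ ^ 2 * σ j ^ 2 :=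
          mul_le_mul_of_nonneg_left (hq_le j) (sq_nonneg _)
        have h3 : (σ j)⁻¹ ^ 2 * σ j ^ 2 = 1 := by field_simp
        linarith [h1 ▸ h2, h3 ▸ h2]
    set W := (S * U) * diagonal dinv with hW
    have hWtW : Wᵀ * W = diagonal (fun j => if σ j = 0 then (0:ℝ) else 1) := by
      rw [hW, transpose_mul, diagonal_transpose,
        Matrix.mul_assoc _ (S * U)ᵀ _, ← Matrix.mul_assoc (S * U)ᵀ (S * U) _,
        hYtY, hD]
      simp only [diagonal_mul_diagonal]
      refine Matrix.ext fun j k => ?_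
      simp only [Matrix.diagonal_apply]
      split_ifs with hjk h0
      · simp [hdinv, h0]
      · simp only [hdinv]
        rw [if_neg h0]
        field_simp
      · rfl
    have hWind : W * diagonal (fun j => if σ j = 0 then (0:ℝ) else 1) = W := by
      rw [hW, Matrix.mul_assoc, diagonal_mul_diagonal]
      congr 1
      refine Matrix.ext fun j k => ?_
      simp only [Matrix.diagonal_apply]
      split_ifs with hjk h0
      · simp [hdinv, h0]
      · ring
      · rfl
    have hQt : (W * Wᵀ)ᵀ = W * Wᵀ := by rw [transpose_mul, transpose_transpose]
    have hQQ : (W * Wᵀ) * (W * Wᵀ) = W * Wᵀ := by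
      rw [Matrix.mul_assoc W Wᵀ (W * Wᵀ), ← Matrix.mul_assoc Wᵀ W Wᵀ, hWtW,
        ← Matrix.mul_assoc W _ Wᵀ, hWind]
    have hsa : ∑ j, a j ≤ (r : ℝ) := by
      have hb := trace_proj_le (W * Wᵀ) hQt hQQ V
      rw [hV, trace_one, trace_VVt W V] at hb
      have e1 : (Vᵀ * W)ᵀ = Wᵀ * V := by
        have h := Matrix.transpose_mul Vᵀ W
        rwa [transpose_transpose] at h
      rw [← e1, transpose_transpose, Matrix.trace_mul_comm, frob_eq_trace] at hb
      have e2 : Vᵀ * W = M * diagonal dinv := by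
        rw [hW, ← Matrix.mul_assoc, hM]
      rw [e2] at hb
      have e3 : ∑ i, ∑ j, ((M * diagonal dinv) i j) ^ 2 = ∑ j, a j := by
        rw [Finset.sum_comm]
        apply sum_congr rfl
        intro j _
        simp only [Matrix.mul_diagonal, ha]
        rw [mul_sum]
        apply sum_congr rfl
        intro i _
        ring
      rw [e3] at hb
      simpa using hb
    have hbanti : Antitone (fun j => σ j ^ 2) := fun i j hij =>
      pow_le_pow_left₀ (hσ_nonneg j) (hσ_anti hij) 2
    have hfinal : ∑ j, q j ≤
        ∑ j ∈ univ.filter (fun j : Fin K => (j : ℕ) < r), σ j ^ 2 := by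
      calc ∑ j, q j = ∑ j, σ j ^ 2 * a j := by
            apply sum_congr rfl; intro j _; rw [hqa j]
        _ ≤ _ := key_sum hrK _ a hbanti (fun j => sq_nonneg _) ha0 ha1 hsa
    linarith
  · -- attainment
    intro V hV hcol
    rw [herr V hV]
    have hVdiag : ∀ i : Fin r, ∑ k, V k i * V k i = 1 := by
      intro i
      have h := congrFun (congrFun hV i) i
      simpa [Matrix.mul_apply, Matrix.one_apply, Matrix.transpose_apply] using h
    have htrG : trace ((Vᵀ * S)ᵀ * (Vᵀ * S)) =
        ∑ j ∈ univ.filter (fun j : Fin K => (j : ℕ) < r), σ j ^ 2 := by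
      rw [← sum_castLE hrK (fun j => σ j ^ 2)]
      have e : (Vᵀ * S) * (Vᵀ * S)ᵀ = Vᵀ * ((S * Sᵀ) * V) := by
        rw [transpose_mul, transpose_transpose, Matrix.mul_assoc Vᵀ S (Sᵀ * V),
          Matrix.mul_assoc S Sᵀ V]
      rw [Matrix.trace_mul_comm, e]
      have : ∀ i : Fin r, (Vᵀ * ((S * Sᵀ) * V)) i i = σ (Fin.castLE hrK i) ^ 2 := by
        intro i
        have hc : ∀ k, ((S * Sᵀ) * V) k i = σ (Fin.castLE hrK i) ^ 2 * V k i := by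
          intro k
          have h := congrFun (hcol i) k
          simpa [Matrix.mulVec, dotProduct, Matrix.mul_apply] using h
        simp only [Matrix.mul_apply, Matrix.transpose_apply]
        calc ∑ k, V k i * ((S * Sᵀ) * V) k i
            = ∑ k, σ (Fin.castLE hrK i) ^ 2 * (V k i * V k i) := by
              apply sum_congr rfl; intro k _; rw [hc k]; ring
          _ = σ (Fin.castLE hrK i) ^ 2 := by rw [← mul_sum, hVdiag i, mul_one]
      simp only [Matrix.trace, Matrix.diag]
      exact sum_congr rfl fun i _ => this i
    rw [htrG]
    linarith
end

section
/- Semi-discrete buoyancy conservation: Let N ∈ ℕ and let D_x, D_y ∈ Matrix (Fin N) (Fin N) ℝ be skew-symmetric. Let h, s, u, v : ℝ → ℝᴺ with h and s differentiable, and suppose for all t: h'(t) = −( D_x.mulVec (h(t) ∘ u(t)) + D_y.mulVec (h(t) ∘ v(t)) ) and s'(t) = −( u(t) ∘ (D_x.mulVec (s(t))) + v(t) ∘ (D_y.mulVec (s(t))) ), where ∘ is the entrywise product. Then the discrete total buoyancy Σ_i h_i(t)·s_i(t) is constant in t. -/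
open Matrix

lemma skew_pair {N : ℕ} (D : Matrix (Fin N) (Fin N) ℝ) (hD : Dᵀ = -D) (w z : Fin N → ℝ) :
    (∑ i, D.mulVec w i * z i) + ∑ i, w i * D.mulVec z i = 0 := by
  have hD' : ∀ i j, D j i = -D i j := fun i j => by
    have := congrFun (congrFun hD i) j
    simpa [Matrix.transpose_apply] using this
  simp only [Matrix.mulVec, dotProduct, Finset.sum_mul, Finset.mul_sum]
  rw [Finset.sum_comm (f := fun i j => w i * (D i j * z j))]
  rw [← Finset.sum_add_distrib]
  refine Finset.sum_eq_zero fun i _ => ?_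
  rw [← Finset.sum_add_distrib]
  refine Finset.sum_eq_zero fun j _ => ?_
  rw [hD' i j]; ring

/-- Semi-discrete buoyancy conservation: if `D_x, D_y` are skew-symmetric,
`h' = -(D_x (h ∘ u) + D_y (h ∘ v))` and `s' = -(u ∘ (D_x s) + v ∘ (D_y s))`,
then the discrete total buoyancy `∑ᵢ hᵢ sᵢ` is constant in time. -/
theorem semidiscrete_buoyancy_conservation
    (N : ℕ)
    (Dx Dy : Matrix (Fin N) (Fin N) ℝ)
    (hDx : Dxᵀ = -Dx) (hDy : Dyᵀ = -Dy)
    (h s u v : ℝ → Fin N → ℝ)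
    (hh : ∀ t : ℝ, HasDerivAt h
      (-(Dx.mulVec (h t * u t) + Dy.mulVec (h t * v t))) t)
    (hs : ∀ t : ℝ, HasDerivAt s
      (-(u t * Dx.mulVec (s t) + v t * Dy.mulVec (s t))) t) :
    ∀ t : ℝ, ∑ i, h t i * s t i = ∑ i, h 0 i * s 0 i := by
  have key : ∀ t : ℝ, HasDerivAt (fun t => ∑ i, h t i * s t i) 0 t := by
    intro t
    have hhi := hasDerivAt_pi.mp (hh t)
    have hsi := hasDerivAt_pi.mp (hs t)
    have hsum := HasDerivAt.sum (u := Finset.univ)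
      (fun i _ => ((hhi i).mul (hsi i)))
    convert hsum using 1
    case e'_4 => rfl
    case e'_5 => rfl
    case e'_8 => funext x; simp [Finset.sum_apply]
    symm
    have expand : ∑ i : Fin N,
        ((-(Dx.mulVec (h t * u t) + Dy.mulVec (h t * v t))) i * s t i
          + h t i * (-(u t * Dx.mulVec (s t) + v t * Dy.mulVec (s t))) i)
        = -(((∑ i, Dx.mulVec (h t * u t) i * s t i)
              + ∑ i, (h t * u t) i * Dx.mulVec (s t) i)
          + ((∑ i, Dy.mulVec (h t * v t) i * s t i)
              + ∑ i, (h t * v t) i * Dy.mulVec (s t) i)) := by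
      simp only [Pi.add_apply, Pi.neg_apply, Pi.mul_apply, ← Finset.sum_add_distrib,
        ← Finset.sum_neg_distrib]
      apply Finset.sum_congr rfl
      intro i _
      ring
    rw [expand, skew_pair Dx hDx, skew_pair Dy hDy]
    norm_num
  intro t
  exact is_const_of_deriv_eq_zero (fun x => (key x).differentiableAt)
    (fun x => (key x).deriv) t 0
end
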